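/- Let b₀, b₁ be elements of a base B of a proper cone Q in a finite-dimensional real vector space and let λ ∈ [0,1]. Then the minimal average error probability Π_λ(b₀,b₁) = min over all f ∈ Q* with 0 ≤_{Q*} f ≤_{Q*} e_B of λ(1 − ⟨f,b₀⟩) + (1−λ)⟨f,b₁⟩ equals (1 − ‖λb₀ − (1−λ)b₁‖_B)/2. -/

import Mathlib

set_option linter.unusedSectionVars false


open Set

variable {V : Type*} [NormedAddCommGroup V] [NormedSpace ℝ V] [FiniteDimensional ℝ V]

def IsConvexCone (Q : Set V) : Prop :=
  ∀ x ∈ Q, ∀ y ∈ Q, ∀ a b : ℝ, 0 ≤ a → 0 ≤ b → a • x + b • y ∈ Q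

def dualConeSet (Q : Set V) : Set (V →L[ℝ] ℝ) := {f | ∀ q ∈ Q, 0 ≤ f q}

def IsBase (Q B : Set V) : Prop :=
  B ⊆ Q ∧ IsCompact B ∧ Convex ℝ B ∧
    ∀ q ∈ Q, q ≠ 0 → ∃! p : ℝ × V, 0 < p.1 ∧ p.2 ∈ B ∧ q = p.1 • p.2

noncomputable def baseNorm (B : Set V) (v : V) : ℝ :=
  sInf {r | ∃ l m : ℝ, ∃ b₁ ∈ B, ∃ b₂ ∈ B, 0 ≤ l ∧ 0 ≤ m ∧ v = l • b₁ - m • b₂ ∧ r = l + m}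

/-! ### Auxiliary lemmas -/

def Dset (B : Set V) (v : V) : Set ℝ :=
  {r | ∃ l m : ℝ, ∃ b₁ ∈ B, ∃ b₂ ∈ B, 0 ≤ l ∧ 0 ≤ m ∧ v = l • b₁ - m • b₂ ∧ r = l + m}

lemma baseNorm_eq (B : Set V) (v : V) : baseNorm B v = sInf (Dset B v) := rfl

lemma Dset_nonneg {B : Set V} {v : V} {r : ℝ} (hr : r ∈ Dset B v) : 0 ≤ r := by
  obtain ⟨l, m, _, _, _, _, hl, hm, _, rfl⟩ := hr; linarith

lemma Dset_bddBelow (B : Set V) (v : V) : BddBelow (Dset B v) :=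
  ⟨0, fun _ hr => Dset_nonneg hr⟩

lemma baseNorm_nonneg (B : Set V) (v : V) : 0 ≤ baseNorm B v :=
  baseNorm_eq B v ▸ Real.sInf_nonneg fun _ hr => Dset_nonneg hr

lemma baseNorm_le {B : Set V} {v : V} {l m : ℝ} {p q : V} (hp : p ∈ B) (hq : q ∈ B)
    (hl : 0 ≤ l) (hm : 0 ≤ m) (hv : v = l • p - m • q) : baseNorm B v ≤ l + m :=
  csInf_le (Dset_bddBelow B v) ⟨l, m, p, hp, q, hq, hl, hm, hv, rfl⟩

lemma combine_mem {B : Set V} (hconvB : Convex ℝ B) {p q b : V} (hp : p ∈ B) (hq : q ∈ B)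
    (hb : b ∈ B) {a c : ℝ} (ha : 0 ≤ a) (hc : 0 ≤ c) :
    ∃ d ∈ B, a • p + c • q = (a + c) • d := by
  rcases eq_or_lt_of_le (add_nonneg ha hc) with h | h
  · refine ⟨b, hb, ?_⟩
    have ha0 : a = 0 := by linarith
    have hc0 : c = 0 := by linarith
    simp [ha0, hc0]
  · refine ⟨(a / (a + c)) • p + (c / (a + c)) • q,
      hconvB hp hq (by positivity) (by positivity) (by field_simp), ?_⟩
    rw [smul_add, smul_smul, smul_smul]
    have h1 : (a + c) * (a / (a + c)) = a := by field_simp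
    have h2 : (a + c) * (c / (a + c)) = c := by field_simp
    rw [h1, h2]

lemma baseNorm_add_le {B : Set V} (hconvB : Convex ℝ B) {b : V} (hb : b ∈ B)
    (hne : ∀ w : V, (Dset B w).Nonempty) (x y : V) :
    baseNorm B (x + y) ≤ baseNorm B x + baseNorm B y := by
  rw [baseNorm_eq B x, baseNorm_eq B y, ← sub_le_iff_le_add]
  refine le_csInf (hne x) fun r hr => ?_
  rw [sub_le_comm]
  refine le_csInf (hne y) fun s hs => ?_
  rw [sub_le_iff_le_add]
  obtain ⟨l₁, m₁, p₁, hp₁, q₁, hq₁, hl₁, hm₁, hx, rfl⟩ := hr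
  obtain ⟨l₂, m₂, p₂, hp₂, q₂, hq₂, hl₂, hm₂, hy, rfl⟩ := hs
  obtain ⟨c, hcB, hcc⟩ := combine_mem hconvB hp₁ hp₂ hb hl₁ hl₂
  obtain ⟨d, hdB, hdd⟩ := combine_mem hconvB hq₁ hq₂ hb hm₁ hm₂
  have hxy : x + y = (l₁ + l₂) • c - (m₁ + m₂) • d := by
    rw [← hcc, ← hdd, hx, hy]; abel
  have := baseNorm_le hcB hdB (add_nonneg hl₁ hl₂) (add_nonneg hm₁ hm₂) hxy
  linarith

lemma baseNorm_smul_le {B : Set V} (hne : ∀ w : V, (Dset B w).Nonempty) {c : ℝ} (hc : 0 < c)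
    (x : V) : baseNorm B (c • x) ≤ c * baseNorm B x := by
  have h : ∀ r ∈ Dset B x, baseNorm B (c • x) / c ≤ r := by
    intro r hr
    rw [div_le_iff₀ hc]
    obtain ⟨a, m, p, hp, q, hq, ha, hm, hx, rfl⟩ := hr
    have hcx : c • x = (c * a) • p - (c * m) • q := by
      rw [hx, smul_sub, smul_smul, smul_smul]
    have := baseNorm_le hp hq (by positivity) (by positivity) hcx
    calc baseNorm B (c • x) ≤ c * a + c * m := this
      _ = (a + m) * c := by ring
  have h2 := le_csInf (hne x) h
  rw [div_le_iff₀ hc] at h2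
  rw [baseNorm_eq B x]; linarith

lemma baseNorm_smul {B : Set V} (hne : ∀ w : V, (Dset B w).Nonempty) {c : ℝ} (hc : 0 < c)
    (x : V) : baseNorm B (c • x) = c * baseNorm B x := by
  refine le_antisymm (baseNorm_smul_le hne hc x) ?_
  have h := baseNorm_smul_le hne (inv_pos.mpr hc) (c • x)
  rw [inv_smul_smul₀ hc.ne' x] at h
  calc c * baseNorm B x ≤ c * (c⁻¹ * baseNorm B (c • x)) :=
        mul_le_mul_of_nonneg_left h hc.le
    _ = baseNorm B (c • x) := by field_simp

lemma exists_linear_eq_of_sublinear (N : V → ℝ) (hN0 : ∀ x, 0 ≤ N x)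
    (N_hom : ∀ c : ℝ, 0 < c → ∀ x, N (c • x) = c * N x)
    (N_add : ∀ x y, N (x + y) ≤ N x + N y) (hNz : N 0 = 0) (v : V) :
    ∃ g : V →ₗ[ℝ] ℝ, g v = N v ∧ ∀ x, g x ≤ N x := by
  by_cases hv0 : v = 0
  · exact ⟨0, by simp [hv0, hNz], fun x => hN0 x⟩
  · have H : ∀ c : ℝ, c • v = 0 → (RingHom.id ℝ) c • N v = 0 := fun c hc => by
      rcases smul_eq_zero.mp hc with h | h
      · simp [h]
      · exact absurd h hv0
    have hhf : ∀ x : (LinearPMap.mkSpanSingleton' v (N v) H).domain,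
        (LinearPMap.mkSpanSingleton' v (N v) H) x ≤ N (x : V) := by
      intro x
      obtain ⟨c, hc⟩ : ∃ c : ℝ, c • v = (x : V) := by
        refine Submodule.mem_span_singleton.mp ?_
        rw [← LinearPMap.domain_mkSpanSingleton v (N v) H]
        exact x.2
      have hmem : c • v ∈ (LinearPMap.mkSpanSingleton' v (N v) H).domain := by
        rw [LinearPMap.domain_mkSpanSingleton]
        exact Submodule.smul_mem _ c (Submodule.mem_span_singleton_self v)
      have hx2 : x = ⟨c • v, hmem⟩ := Subtype.ext hc.symm
      rw [hx2, LinearPMap.mkSpanSingleton'_apply]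
      show c • N v ≤ N (c • v)
      rcases lt_trichotomy c 0 with h | h | h
      · have : c • N v ≤ 0 := by
          rw [smul_eq_mul]
          exact mul_nonpos_of_nonpos_of_nonneg h.le (hN0 v)
        exact this.trans (hN0 _)
      · simp [h, hNz]
      · rw [N_hom c h v, smul_eq_mul]
    obtain ⟨g, hgF, hgle⟩ := exists_extension_of_le_sublinear
      (LinearPMap.mkSpanSingleton' v (N v) H) N N_hom N_add hhf
    refine ⟨g, ?_, hgle⟩
    have hFdom : v ∈ (LinearPMap.mkSpanSingleton' v (N v) H).domain := by
      rw [LinearPMap.domain_mkSpanSingleton]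
      exact Submodule.mem_span_singleton_self v
    have h := hgF ⟨v, hFdom⟩
    rwa [LinearPMap.mkSpanSingleton'_apply_self] at h

/-- The minimal average error probability of discriminating `b₀` and `b₁` by tests
(elements `f ∈ Q*` with `f ≤_{Q*} e_B`) equals `(1 - ‖λ b₀ - (1-λ) b₁‖_B)/2`. -/
theorem stmt4 (Q B : Set V) (hconv : IsConvexCone Q) (hclosed : IsClosed Q)
    (hpointed : Q ∩ (-Q) ⊆ {0}) (hgen : ∀ v : V, ∃ a ∈ Q, ∃ b ∈ Q, v = a - b)
    (hBase : IsBase Q B)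
    (e : V →L[ℝ] ℝ) (he : ∀ q ∈ Q, 0 ≤ e q) (heB : B = {q ∈ Q | e q = 1})
    (b₀ b₁ : V) (hb₀ : b₀ ∈ B) (hb₁ : b₁ ∈ B) (l : ℝ) (hl0 : 0 ≤ l) (hl1 : l ≤ 1) :
    sInf {r | ∃ f : V →L[ℝ] ℝ, f ∈ dualConeSet Q ∧ (e - f) ∈ dualConeSet Q ∧
        r = l * (1 - f b₀) + (1 - l) * f b₁} =
      (1 - baseNorm B (l • b₀ - (1 - l) • b₁)) / 2 := by
  have hBconv : Convex ℝ B := hBase.2.2.1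
  have heb : ∀ b ∈ B, e b = 1 := fun b hb => (heB ▸ hb).2
  have hBQ : B ⊆ Q := hBase.1
  set v : V := l • b₀ - (1 - l) • b₁ with hv_def
  -- every element of Q is a nonnegative multiple of an element of B
  have hdecomp : ∀ q ∈ Q, ∃ t : ℝ, ∃ b ∈ B, 0 ≤ t ∧ q = t • b := by
    intro q hq
    by_cases h : q = 0
    · exact ⟨0, b₀, hb₀, le_refl 0, by simp [h]⟩
    · obtain ⟨⟨t, b⟩, ⟨ht, hbB, hq'⟩, _⟩ := hBase.2.2.2 q hq h
      exact ⟨t, b, hbB, ht.le, hq'⟩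
  have hne : ∀ w : V, (Dset B w).Nonempty := by
    intro w
    obtain ⟨a, haQ, c, hcQ, hw⟩ := hgen w
    obtain ⟨t, p, hp, ht, ha⟩ := hdecomp a haQ
    obtain ⟨s, q, hq, hs, hc⟩ := hdecomp c hcQ
    exact ⟨t + s, t, s, p, hp, q, hq, ht, hs, by rw [hw, ha, hc], rfl⟩
  have hev : e v = 2 * l - 1 := by
    simp only [hv_def, map_sub, map_smul, smul_eq_mul, heb b₀ hb₀, heb b₁ hb₁]
    ring
  -- bound on baseNorm on the cone
  have hQbound : ∀ q ∈ Q, baseNorm B q ≤ e q ∧ baseNorm B (-q) ≤ e q := by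
    intro q hq
    obtain ⟨t, b, hbB, ht, rfl⟩ := hdecomp q hq
    have het : e (t • b) = t := by
      rw [map_smul, smul_eq_mul, heb b hbB, mul_one]
    constructor
    · rw [het]
      have := baseNorm_le hbB hb₀ ht (le_refl 0) (show t • b = t • b - (0:ℝ) • b₀ by simp)
      linarith
    · rw [het]
      have := baseNorm_le hb₀ hbB (le_refl 0) ht (show -(t • b) = (0:ℝ) • b₀ - t • b by simp)
      linarith
  -- key lower bound: every test achieves at least the target
  have key : ∀ f : V →L[ℝ] ℝ, f ∈ dualConeSet Q → (e - f) ∈ dualConeSet Q →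
      (1 - baseNorm B v) / 2 ≤ l * (1 - f b₀) + (1 - l) * f b₁ := by
    intro f hf hef
    have hfv : 2 * f v - e v ≤ baseNorm B v := by
      rw [baseNorm_eq]
      refine le_csInf (hne v) ?_
      rintro r ⟨a, m, p, hp, q, hq, ha, hm, hv', rfl⟩
      have hfp : f p ≤ 1 := by
        have := hef p (hBQ hp)
        simp only [ContinuousLinearMap.sub_apply] at this
        rw [heb p hp] at this; linarith
      have hfq : 0 ≤ f q := hf q (hBQ hq)
      have hfv' : f v = a * f p - m * f q := by
        rw [hv', map_sub, map_smul, map_smul, smul_eq_mul, smul_eq_mul]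
      have hev' : e v = a - m := by
        rw [hv', map_sub, map_smul, map_smul, smul_eq_mul, smul_eq_mul,
          heb p hp, heb q hq]; ring
      have h1 : a * f p ≤ a * 1 := mul_le_mul_of_nonneg_left hfp ha
      have h2 : 0 ≤ m * f q := mul_nonneg hm hfq
      rw [hfv', hev']; linarith
    have hfv2 : f v = l * f b₀ - (1 - l) * f b₁ := by
      rw [hv_def, map_sub, map_smul, map_smul, smul_eq_mul, smul_eq_mul]
    have : l * (1 - f b₀) + (1 - l) * f b₁ = l - f v := by rw [hfv2]; ring
    rw [this]; rw [hev] at hfv; linarith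
  -- construct an optimal test via Hahn-Banach
  obtain ⟨g, hgv, hgle⟩ : ∃ g : V →ₗ[ℝ] ℝ, g v = baseNorm B v ∧ ∀ x, g x ≤ baseNorm B x := by
    have hNz : baseNorm B 0 = 0 := by
      have h1 := baseNorm_le hb₀ hb₀ (le_refl (0:ℝ)) (le_refl (0:ℝ))
        (show (0:V) = (0:ℝ) • b₀ - (0:ℝ) • b₀ by simp)
      have h2 := baseNorm_nonneg B (0:V)
      linarith
    exact exists_linear_eq_of_sublinear (baseNorm B) (baseNorm_nonneg B)
      (fun c hc x => baseNorm_smul hne hc x)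
      (fun x y => baseNorm_add_le hBconv hb₀ hne x y) hNz v
  -- the optimal test
  set G : V →L[ℝ] ℝ := LinearMap.toContinuousLinearMap g with hG
  have hGapp : ∀ x, G x = g x := fun x => rfl
  set f : V →L[ℝ] ℝ := (1/2 : ℝ) • (e + G) with hf_def
  have hfapp : ∀ x, f x = (e x + g x) / 2 := by
    intro x
    simp only [hf_def, ContinuousLinearMap.smul_apply, ContinuousLinearMap.add_apply, hGapp,
      smul_eq_mul]
    ring
  have hfQ : f ∈ dualConeSet Q := by
    intro q hq
    have h1 := (hQbound q hq).2
    have h2 := hgle (-q)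
    have h3 : g (-q) = - g q := by rw [map_neg]
    rw [hfapp]; rw [h3] at h2; linarith
  have hefQ : (e - f) ∈ dualConeSet Q := by
    intro q hq
    have h1 := (hQbound q hq).1
    have h2 := hgle q
    simp only [ContinuousLinearMap.sub_apply, hfapp]
    linarith
  have hfval : l * (1 - f b₀) + (1 - l) * f b₁ = (1 - baseNorm B v) / 2 := by
    have hfv : f v = l * f b₀ - (1 - l) * f b₁ := by
      rw [hv_def, map_sub, map_smul, map_smul, smul_eq_mul, smul_eq_mul]
    have hfv2 : f v = (e v + g v) / 2 := hfapp v
    rw [hgv, hev] at hfv2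
    have : l * (1 - f b₀) + (1 - l) * f b₁ = l - f v := by rw [hfv]; ring
    rw [this, hfv2]; ring
  have hmem : (1 - baseNorm B v) / 2 ∈ {r | ∃ f : V →L[ℝ] ℝ, f ∈ dualConeSet Q ∧
      (e - f) ∈ dualConeSet Q ∧ r = l * (1 - f b₀) + (1 - l) * f b₁} :=
    ⟨f, hfQ, hefQ, hfval.symm⟩
  refine le_antisymm ?_ ?_
  · exact csInf_le ⟨(1 - baseNorm B v) / 2, by
      rintro r ⟨f', hf1, hf2, rfl⟩; exact key f' hf1 hf2⟩ hmem
  · refine le_csInf ⟨_, hmem⟩ ?_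
    rintro r ⟨f', hf1, hf2, rfl⟩
    exact key f' hf1 hf2
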